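/- Let v : ℝ → ℝ → ℝ satisfy v s t > 0 for all s ∈ ℝ and t > 0, let γ, k ∈ ℝ with k ≠ 0, and assume: (i) gradient-flow covariance: v (s+τ) t = exp(γ·τ) · v s (exp(k·τ)·t) for all s, τ ∈ ℝ and t > 0; (ii) log-shift invariance: there exists φ : ℝ → ℝ with v (s+τ) t = φ(τ) · v s t for all s, τ ∈ ℝ and t > 0; (iii) for some t₀ > 0 the map s ↦ v s t₀ is continuous. Then there exist a, b ∈ ℝ and c > 0 such that v s t = c · t^b · exp(a·s) for all s ∈ ℝ and t > 0. -/

import Mathlib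

/-- **Rigidity core of Theorem 3.1 (power-law renormalizability).**
A positive shell velocity `v` satisfying both gradient-flow covariance
(`v (s+τ) t = exp(γ τ) · v s (exp(k τ) t)`, with `k ≠ 0`) and log-shift invariance
(`v (s+τ) t = φ τ · v s t`), and continuous in `s` at some time `t₀ > 0`, must be a pure
power law: `v s t = c · t^b · exp (a s)`. -/
theorem power_law_rigidity
    (v : ℝ → ℝ → ℝ)
    (hpos : ∀ s t : ℝ, 0 < t → 0 < v s t)
    (γ k : ℝ) (hk : k ≠ 0)
    (hcov : ∀ s τ t : ℝ, 0 < t →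
      v (s + τ) t = Real.exp (γ * τ) * v s (Real.exp (k * τ) * t))
    (hshift : ∃ φ : ℝ → ℝ, ∀ s τ t : ℝ, 0 < t → v (s + τ) t = φ τ * v s t)
    (hcont : ∃ t₀ : ℝ, 0 < t₀ ∧ Continuous fun s : ℝ => v s t₀) :
    ∃ a b : ℝ, ∃ c : ℝ, 0 < c ∧
      ∀ s t : ℝ, 0 < t → v s t = c * t ^ b * Real.exp (a * s) := by
  obtain ⟨φ, hφ⟩ := hshift
  obtain ⟨t₀, ht₀, hcont⟩ := hcont
  -- φ formula
  have hφval : ∀ τ, φ τ = v τ t₀ / v 0 t₀ := by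
    intro τ
    have := hφ 0 τ t₀ ht₀
    rw [zero_add] at this
    rw [eq_div_iff (hpos 0 t₀ ht₀).ne', ← this]
  have hφpos : ∀ τ, 0 < φ τ := by
    intro τ
    rw [hφval]
    exact div_pos (hpos τ t₀ ht₀) (hpos 0 t₀ ht₀)
  have hφcont : Continuous φ := by
    have hφeq : φ = fun τ => v τ t₀ / v 0 t₀ := funext hφval
    rw [hφeq]
    exact hcont.div_const _
  -- φ is multiplicative
  have hφadd : ∀ τ σ, φ (τ + σ) = φ τ * φ σ := by
    intro τ σ
    have h1 := hφ 0 (τ + σ) t₀ ht₀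
    have h2 := hφ τ σ t₀ ht₀
    have h3 := hφ 0 τ t₀ ht₀
    rw [zero_add] at h1 h3
    have key : φ (τ + σ) * v 0 t₀ = φ σ * (φ τ * v 0 t₀) := by
      rw [← h3, ← h2, h1]
    have hv0 := (hpos 0 t₀ ht₀).ne'
    have key2 : φ (τ + σ) * v 0 t₀ = (φ τ * φ σ) * v 0 t₀ := by linarith [key]
    exact mul_right_cancel₀ hv0 key2
  -- f := log ∘ φ is an additive continuous map
  set f : ℝ → ℝ := fun τ => Real.log (φ τ) with hf
  have hfadd : ∀ τ σ, f (τ + σ) = f τ + f σ := by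
    intro τ σ
    simp only [hf, hφadd, Real.log_mul (hφpos τ).ne' (hφpos σ).ne']
  have hfcont : Continuous f := hφcont.log (fun x => (hφpos x).ne')
  have hf0 : f 0 = 0 := by
    have := hfadd 0 0
    simp at this; linarith
  set F : ℝ →+ ℝ := AddMonoidHom.mk' f hfadd with hF
  have hlin : ∀ τ, f τ = τ * f 1 := by
    intro τ
    have := (F.toRealLinearMap hfcont).map_smul τ (1 : ℝ)
    change F (τ • (1 : ℝ)) = τ • F 1 at this
    simpa [F, smul_eq_mul] using this
  set a := f 1 with ha
  have hφexp : ∀ τ, φ τ = Real.exp (a * τ) := by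
    intro τ
    have : Real.exp (f τ) = φ τ := Real.exp_log (hφpos τ)
    rw [← this, hlin τ, mul_comm]
  -- separate variables: v s t = exp(a s) * v 0 t
  have hsep : ∀ s t, 0 < t → v s t = Real.exp (a * s) * v 0 t := by
    intro s t ht
    have := hφ 0 s t ht
    rw [zero_add] at this
    rw [this, hφexp]
  -- time dependence
  set b := (a - γ) / k with hb
  have hg : ∀ t : ℝ, 0 < t → v 0 t = t ^ b * v 0 1 := by
    intro t ht
    set τ := Real.log t / k with hτ
    have hexp : Real.exp (k * τ) = t := by
      rw [hτ, mul_div_cancel₀ _ hk, Real.exp_log ht]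
    have := hcov 0 τ 1 one_pos
    rw [zero_add, mul_one, hexp] at this
    have h2 : v τ 1 = Real.exp (a * τ) * v 0 1 := hsep τ 1 one_pos
    rw [h2] at this
    have hv0t : v 0 t = Real.exp ((a - γ) * τ) * v 0 1 := by
      have hEγ := (Real.exp_pos (γ * τ)).ne'
      rw [sub_mul, Real.exp_sub, div_mul_eq_mul_div, eq_div_iff hEγ]
      linarith [this]
    rw [hv0t, Real.rpow_def_of_pos ht]
    congr 1
    rw [hb, hτ]
    field_simp
  refine ⟨a, b, v 0 1, hpos 0 1 one_pos, fun s t ht => ?_⟩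
  rw [hsep s t ht, hg t ht]
  ring
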